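/- Let E be a Hausdorff locally convex topological vector space and F ⊂ E a nonempty set which is weak-admissible at x̂ ∈ F, determined by the family C. If x̂ ∈ F \ int(F), then inf_{φ ∈ C} φ(x̂) = 0. -/

import Mathlib

open Topology Filter Set

noncomputable section

section Defs

variable {E : Type*} [AddCommGroup E] [Module ℝ E] [TopologicalSpace E]

/-- The canonical map from the topological dual of `E` to the weak-star dual. -/
def toWD (φ : E →L[ℝ] ℝ) : WeakDual ℝ E := φ

/-- The weak-star closed convex hull of a set of continuous linear functionals. -/
def wcch (B : Set (E →L[ℝ] ℝ)) : Set (WeakDual ℝ E) :=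
  closure (convexHull ℝ (toWD '' B))

/-- `f` is Gateaux differentiable at `x` with Gateaux-differential `f'`. -/
def HasGateauxAt (f : E → ℝ) (f' : E →L[ℝ] ℝ) (x : E) : Prop :=
  ∀ v : E, Tendsto (fun t : ℝ => (f (x + t • v) - f x - t * f' v) / t) (𝓝[>] 0) (𝓝 0)

/-- The family `C` is equi-Gateaux differentiable at `x`, with differentials given by `D`. -/
def EquiGateauxAt (C : Set (E → ℝ)) (D : (E → ℝ) → E →L[ℝ] ℝ) (x : E) : Prop :=
  (∀ φ ∈ C, HasGateauxAt φ (D φ) x) ∧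
  ∀ v : E, ∀ ε : ℝ, 0 < ε → ∃ δ : ℝ, 0 < δ ∧ ∀ t : ℝ, 0 < t → t < δ →
    ∀ φ ∈ C, |(φ (x + t • v) - φ x - t * (D φ) v) / t| ≤ ε

/-- The family `C` is equi-lower semicontinuous at `x`. -/
def EquiLscAt (C : Set (E → ℝ)) (x : E) : Prop :=
  ∀ ε : ℝ, 0 < ε → ∃ O ∈ 𝓝 x, ∀ y ∈ O, ∀ φ ∈ C, φ y - φ x > -ε

/-- `[C]^× = {x ∈ E : φ(x) ≥ 0 for all φ ∈ C}`. -/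
def polarSet (C : Set (E → ℝ)) : Set E := {x | ∀ φ ∈ C, 0 ≤ φ x}

/-- The multiplier set `T_C(x̂)`. -/
def multSet (C : Set (E → ℝ)) (D : (E → ℝ) → E →L[ℝ] ℝ) (x : E) : Set (WeakDual ℝ E) :=
  ⋂ n ∈ {n : ℕ | 1 ≤ n}, wcch (D '' {φ | φ ∈ C ∧ φ x ∈ Icc (0:ℝ) (1/(n:ℝ))})

/-- `F` is weak-admissible at `x ∈ F`, determined by `C` (with differentials `D`). -/
def WeakAdmissibleAt (F : Set E) (C : Set (E → ℝ)) (D : (E → ℝ) → E →L[ℝ] ℝ) (x : E) : Prop :=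
  x ∈ F ∧ C.Nonempty ∧ F = polarSet C ∧ EquiGateauxAt C D x ∧
    ({φ | φ ∈ C ∧ φ x ≠ 0} = ∅ ∨ EquiLscAt {φ | φ ∈ C ∧ φ x ≠ 0} x) ∧
    IsCompact (wcch (D '' C))

end Defs

section NormedDefs

variable {Y : Type*} [NormedAddCommGroup Y] [NormedSpace ℝ Y]

/-- `A` is admissible at `x ∈ A`, determined by `C` (with differentials `D`). -/
def AdmissibleAt (A : Set Y) (C : Set (Y → ℝ)) (D : (Y → ℝ) → Y →L[ℝ] ℝ) (x : Y) : Prop :=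
  x ∈ A ∧ C.Nonempty ∧ A = polarSet C ∧ EquiGateauxAt C D x ∧
    (∃ r : NNReal, ∃ ε : ℝ, 0 < ε ∧ ∀ φ ∈ C, LipschitzOnWith r φ (Metric.ball x ε)) ∧
    toWD (0 : Y →L[ℝ] ℝ) ∉ wcch (D '' C)

/-- The recession cone of a set. -/
def recCone (K : Set Y) : Set Y := {v | ∀ l : ℝ, 0 < l → ∀ x ∈ K, x + l • v ∈ K}

/-- The barrier cone of `K`: functionals bounded above on `K`. -/
def barCone (K : Set Y) : Set (Y →L[ℝ] ℝ) := {φ | BddAbove (φ '' K)}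

/-- The dual positive cone `A*`. -/
def posDualCone (A : Set Y) : Set (Y →L[ℝ] ℝ) := {φ | ∀ y ∈ A, 0 ≤ φ y}

end NormedDefs

/-- If `F` is weak-admissible at `xh ∈ F`, determined by `C`, and
`xh ∈ F \ int(F)`, then `inf_{φ ∈ C} φ(xh) = 0`. -/
theorem inf_eq_zero_of_boundary
    {E : Type*} [AddCommGroup E] [Module ℝ E] [TopologicalSpace E]
    [IsTopologicalAddGroup E] [ContinuousSMul ℝ E] [LocallyConvexSpace ℝ E] [T2Space E]
    (F : Set E) (hF : F.Nonempty) (C : Set (E → ℝ)) (D : (E → ℝ) → E →L[ℝ] ℝ) (xh : E)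
    (hadm : WeakAdmissibleAt F C D xh)
    (hx : xh ∈ F \ interior F) :
    sInf ((fun φ => φ xh) '' C) = 0 := by
  obtain ⟨hxF, hCne, hFpol, hEG, hS, hcomp⟩ := hadm
  have hnonneg : ∀ φ ∈ C, 0 ≤ φ xh := by
    intro φ hφ
    have : xh ∈ polarSet C := hFpol ▸ hxF
    exact this φ hφ
  have hbdd : BddBelow ((fun φ => φ xh) '' C) := by
    refine ⟨0, ?_⟩
    rintro y ⟨φ, hφ, rfl⟩
    exact hnonneg φ hφ
  have hne : ((fun φ => φ xh) '' C).Nonempty := hCne.image _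
  have h0le : 0 ≤ sInf ((fun φ => φ xh) '' C) := le_csInf hne (by
    rintro y ⟨φ, hφ, rfl⟩; exact hnonneg φ hφ)
  by_contra hne0
  have hm : 0 < sInf ((fun φ => φ xh) '' C) := lt_of_le_of_ne h0le (Ne.symm hne0)
  set m := sInf ((fun φ => φ xh) '' C) with hmdef
  have hmle : ∀ φ ∈ C, m ≤ φ xh := fun φ hφ => csInf_le hbdd ⟨φ, hφ, rfl⟩
  have hSC : {φ | φ ∈ C ∧ φ xh ≠ 0} = C := by
    ext φ
    constructor
    · exact fun h => h.1
    · intro hφ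
      exact ⟨hφ, by have := lt_of_lt_of_le hm (hmle φ hφ); positivity⟩
  have hlsc : EquiLscAt {φ | φ ∈ C ∧ φ xh ≠ 0} xh := by
    rcases hS with h | h
    · exfalso
      obtain ⟨φ, hφ⟩ := hCne
      have : φ ∈ ({φ | φ ∈ C ∧ φ xh ≠ 0} : Set (E → ℝ)) := hSC.symm ▸ hφ
      rw [h] at this
      exact this
    · exact h
  obtain ⟨O, hO, hOprop⟩ := hlsc m hm
  have hOF : O ⊆ F := by
    intro y hy
    rw [hFpol]
    intro φ hφ
    have := hOprop y hy φ (hSC.symm ▸ hφ)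
    have h2 := hmle φ hφ
    linarith
  have : xh ∈ interior F := mem_interior_iff_mem_nhds.2 (Filter.mem_of_superset hO hOF)
  exact hx.2 this
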